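/- arXiv:2005.04514 — 3 statements merged into one kernel-verified Lean document; each statement's English description precedes it below -/
import Mathlib

section
/- Let c ∈ (0, 1] and let k₀, N be positive integers with N ≥ ⌈3k₀/2⌉. Then there is a constant C (depending only on c) such that the sum over k from 1 to N, k ≠ k₀, of k^{c−1}·|k₀ − k| / (k₀^c − k^c)² is at most C · N^{1−c} · log(N+1). -/
open Finset Real

lemma key_ineq {c : ℝ} (hc0 : 0 < c) (hc1 : c ≤ 1) {x y : ℝ}
    (hx : 0 ≤ x) (hxy : x ≤ y) (hy : 0 < y) :
    c * y ^ (c - 1) * (y - x) ≤ y ^ c - x ^ c := by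
  have ht0 : 0 ≤ x / y := div_nonneg hx hy.le
  have ht1 : x / y ≤ 1 := div_le_one_of_le₀ hxy hy.le
  have hb : (x / y) ^ c ≤ 1 + c * (x / y - 1) := by
    have := _root_.rpow_one_add_le_one_add_mul_self (s := x / y - 1) (by linarith) hc0.le hc1
    simpa using this
  have h1 : c * (1 - x / y) ≤ 1 - (x / y) ^ c := by linarith
  have hxc : x ^ c = (x / y) ^ c * y ^ c := by
    rw [← Real.mul_rpow ht0 hy.le, div_mul_cancel₀ _ hy.ne']
  have hyc : y ^ (c - 1) * y = y ^ c := by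
    rw [← Real.rpow_add_one hy.ne']; ring_nf
  have hycpos : (0:ℝ) < y ^ c := Real.rpow_pos_of_pos hy c
  have hxy' : (1 - x / y) * y = y - x := by field_simp
  calc c * y ^ (c - 1) * (y - x) = c * (1 - x / y) * (y ^ (c - 1) * y) := by
        rw [← hxy']; ring
    _ = c * (1 - x / y) * y ^ c := by rw [hyc]
    _ ≤ (1 - (x / y) ^ c) * y ^ c := mul_le_mul_of_nonneg_right h1 hycpos.le
    _ = y ^ c - x ^ c := by rw [hxc]; ring

lemma sum_rpow_le {c : ℝ} (hc0 : 0 < c) (hc1 : c ≤ 1) (m : ℕ) :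
    ∑ k ∈ Icc 1 m, (k : ℝ) ^ (c - 1) ≤ (m : ℝ) ^ c / c := by
  have tel : ∑ i ∈ range m, (((i + 1 : ℕ) : ℝ) ^ c - ((i : ℕ) : ℝ) ^ c) = (m : ℝ) ^ c := by
    rw [Finset.sum_range_sub (f := fun i => ((i : ℕ) : ℝ) ^ c)]
    simp [Real.zero_rpow hc0.ne']
  have hsum : ∑ k ∈ Icc 1 m, c * (k : ℝ) ^ (c - 1) ≤ (m : ℝ) ^ c := by
    rw [show Icc 1 m = Ico 1 (m + 1) from by rw [Finset.Ico_add_one_right_eq_Icc], Finset.sum_Ico_eq_sum_range]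
    simp only [Nat.add_sub_cancel]
    calc ∑ i ∈ range m, c * ((1 + i : ℕ) : ℝ) ^ (c - 1)
        ≤ ∑ i ∈ range m, (((i + 1 : ℕ) : ℝ) ^ c - ((i : ℕ) : ℝ) ^ c) := by
          apply Finset.sum_le_sum
          intro i _
          have h := key_ineq hc0 hc1 (x := (i : ℝ)) (y := ((i : ℝ) + 1))
            (by positivity) (by linarith) (by positivity)
          push_cast
          have : ((i : ℝ) + 1) - (i : ℝ) = 1 := by ring
          rw [this, mul_one] at h
          convert h using 3
          · rfl
          · ring
      _ = (m : ℝ) ^ c := tel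
  rw [le_div_iff₀ hc0, Finset.sum_mul]
  calc ∑ k ∈ Icc 1 m, (k : ℝ) ^ (c - 1) * c
      = ∑ k ∈ Icc 1 m, c * (k : ℝ) ^ (c - 1) := by
        apply Finset.sum_congr rfl; intro k _; ring
    _ ≤ _ := hsum

lemma harmonic_icc_le (N : ℕ) :
    ∑ j ∈ Icc 1 N, ((j : ℝ))⁻¹ ≤ 1 + Real.log N := by
  have h := harmonic_le_one_add_log N
  rw [harmonic_eq_sum_Icc] at h
  push_cast at h
  exact h

lemma sum_inv_le_harmonic {N : ℕ} (S : Finset ℕ) (f : ℕ → ℕ)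
    (hmem : ∀ k ∈ S, f k ∈ Icc 1 N)
    (hinj : ∀ k ∈ S, ∀ k' ∈ S, f k = f k' → k = k') :
    ∑ k ∈ S, ((f k : ℕ) : ℝ)⁻¹ ≤ ∑ j ∈ Icc 1 N, ((j : ℝ))⁻¹ := by
  calc ∑ k ∈ S, ((f k : ℕ) : ℝ)⁻¹ = ∑ j ∈ S.image f, ((j : ℝ))⁻¹ :=
        (Finset.sum_image (f := fun j : ℕ => ((j : ℝ))⁻¹) (g := f) hinj).symm
    _ ≤ ∑ j ∈ Icc 1 N, ((j : ℝ))⁻¹ := by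
        apply Finset.sum_le_sum_of_subset_of_nonneg
        · intro j hj
          obtain ⟨k, hk, rfl⟩ := Finset.mem_image.mp hj
          exact hmem k hk
        · intro i _ _; positivity

lemma term_bound {c : ℝ} (hc0 : 0 < c) (hc1 : c ≤ 1) {k k₀ N : ℕ}
    (hk1 : 1 ≤ k) (hkN : k ≤ N) (hk01 : 1 ≤ k₀) (hk0N : k₀ ≤ N) (hne : k ≠ k₀) :
    (k : ℝ) ^ (c - 1) * |(k₀ : ℝ) - (k : ℝ)| / ((k₀ : ℝ) ^ c - (k : ℝ) ^ c) ^ 2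
      ≤ 2 / c ^ 2 * (N : ℝ) ^ (1 - c) *
        (|(k₀ : ℝ) - (k : ℝ)|⁻¹ + if k < k₀ then (k : ℝ) ^ (c - 1) / (k₀ : ℝ) ^ c else 0) := by
  have hkr : (1:ℝ) ≤ (k:ℝ) := by exact_mod_cast hk1
  have hk0r : (1:ℝ) ≤ (k₀:ℝ) := by exact_mod_cast hk01
  have hkrp : (0:ℝ) < (k:ℝ) := by linarith
  have hk0rp : (0:ℝ) < (k₀:ℝ) := by linarith
  have hkNr : (k:ℝ) ≤ (N:ℝ) := by exact_mod_cast hkN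
  have hk0Nr : (k₀:ℝ) ≤ (N:ℝ) := by exact_mod_cast hk0N
  have hNP : (0:ℝ) < (N:ℝ) ^ (1-c) := Real.rpow_pos_of_pos (by linarith) _
  have h1c : (0:ℝ) ≤ 1 - c := by linarith
  have hc2 : (0:ℝ) < c ^ 2 := pow_pos hc0 2
  have hP : (0:ℝ) < (k:ℝ) ^ (c-1) := Real.rpow_pos_of_pos hkrp _
  have hQ : (0:ℝ) < (k₀:ℝ) ^ (c-1) := Real.rpow_pos_of_pos hk0rp _
  have hT : (0:ℝ) < (k₀:ℝ) ^ c := Real.rpow_pos_of_pos hk0rp _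
  rcases lt_or_gt_of_ne hne with hlt | hgt
  · -- k < k₀
    have hd : (k:ℝ) + 1 ≤ (k₀:ℝ) := by exact_mod_cast hlt
    have hΔ : (0:ℝ) < (k₀:ℝ) - (k:ℝ) := by linarith
    have habs : |(k₀:ℝ) - (k:ℝ)| = (k₀:ℝ) - (k:ℝ) := abs_of_nonneg (by linarith)
    rw [habs, if_pos hlt]
    have h1 := key_ineq hc0 hc1 (x := (k:ℝ)) (y := (k₀:ℝ)) (by linarith) (by linarith) hk0rp
    have hnum : (0:ℝ) < c * (k₀:ℝ)^(c-1) * ((k₀:ℝ) - (k:ℝ)) :=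
      mul_pos (mul_pos hc0 hQ) hΔ
    have hsq : (c * (k₀:ℝ)^(c-1) * ((k₀:ℝ) - (k:ℝ)))^2 ≤ ((k₀:ℝ)^c - (k:ℝ)^c)^2 :=
      pow_le_pow_left₀ hnum.le h1 2
    have hQS : (k₀:ℝ)^(c-1) * (k₀:ℝ)^(1-c) = 1 := by
      rw [← Real.rpow_add hk0rp]; norm_num
    have hST : (k₀:ℝ)^(1-c) * (k₀:ℝ)^c = (k₀:ℝ) := by
      rw [← Real.rpow_add hk0rp, show (1-c)+c = 1 by ring, Real.rpow_one]
    have hSN : (k₀:ℝ)^(1-c) ≤ (N:ℝ)^(1-c) := Real.rpow_le_rpow (by linarith) hk0Nr h1c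
    have hS : (0:ℝ) < (k₀:ℝ)^(1-c) := Real.rpow_pos_of_pos hk0rp _
    have step1 : (k:ℝ)^(c-1) * ((k₀:ℝ) - (k:ℝ)) / ((k₀:ℝ)^c - (k:ℝ)^c)^2
        ≤ (k:ℝ)^(c-1) * ((k₀:ℝ)^(1-c))^2 / (c^2 * ((k₀:ℝ) - (k:ℝ))) := by
      calc (k:ℝ)^(c-1) * ((k₀:ℝ) - (k:ℝ)) / ((k₀:ℝ)^c - (k:ℝ)^c)^2
          ≤ (k:ℝ)^(c-1) * ((k₀:ℝ) - (k:ℝ)) / (c * (k₀:ℝ)^(c-1) * ((k₀:ℝ) - (k:ℝ)))^2 :=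
            div_le_div_of_nonneg_left (by positivity) (pow_pos hnum 2) hsq
        _ = (k:ℝ)^(c-1) * ((k₀:ℝ)^(1-c))^2 / (c^2 * ((k₀:ℝ) - (k:ℝ))) := by
            rw [div_eq_div_iff (pow_pos hnum 2).ne' (mul_pos hc2 hΔ).ne']
            linear_combination (-(c^2 * ((k₀:ℝ) - (k:ℝ))^2 * (k:ℝ)^(c-1) *
              ((k₀:ℝ)^(c-1) * (k₀:ℝ)^(1-c) + 1))) * hQS
    have hv : (0:ℝ) ≤ (k:ℝ)^(c-1) / (k₀:ℝ)^c := (div_pos hP hT).le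
    rcases le_or_gt k₀ (2*k) with hB | hC
    · -- k₀ ≤ 2k
      have hk2 : (k₀:ℝ) ≤ 2*(k:ℝ) := by exact_mod_cast hB
      have hPQ : (k:ℝ)^(c-1) ≤ 2 * (k₀:ℝ)^(c-1) := by
        have h2' : (k:ℝ)^(c-1) ≤ ((k₀:ℝ)/2)^(c-1) :=
          Real.rpow_le_rpow_of_nonpos (by linarith) (by linarith) (by linarith)
        have h3' : ((k₀:ℝ)/2)^(c-1) = (k₀:ℝ)^(c-1) / (2:ℝ)^(c-1) :=
          Real.div_rpow (by linarith) (by norm_num) _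
        have h4' : (1:ℝ)/2 ≤ (2:ℝ)^(c-1) := by
          have h := Real.rpow_le_rpow_of_exponent_le (by norm_num : (1:ℝ) ≤ 2)
            (by linarith : (-1:ℝ) ≤ c-1)
          rw [Real.rpow_neg_one] at h
          norm_num at h
          linarith
        have h5' : (k₀:ℝ)^(c-1) / (2:ℝ)^(c-1) ≤ (k₀:ℝ)^(c-1) / (1/2) :=
          div_le_div_of_nonneg_left hQ.le (by norm_num) h4'
        have h6' : (k₀:ℝ)^(c-1) / (1/2) = 2*(k₀:ℝ)^(c-1) := by ring
        calc (k:ℝ)^(c-1) ≤ ((k₀:ℝ)/2)^(c-1) := h2'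
          _ = (k₀:ℝ)^(c-1) / (2:ℝ)^(c-1) := h3'
          _ ≤ (k₀:ℝ)^(c-1) / (1/2) := h5'
          _ = 2*(k₀:ℝ)^(c-1) := h6'
      have hPS : (k:ℝ)^(c-1) * ((k₀:ℝ)^(1-c))^2 ≤ 2*(N:ℝ)^(1-c) := by
        calc (k:ℝ)^(c-1) * ((k₀:ℝ)^(1-c))^2 ≤ 2*(k₀:ℝ)^(c-1) * ((k₀:ℝ)^(1-c))^2 :=
              mul_le_mul_of_nonneg_right hPQ (sq_nonneg _)
          _ = 2*(k₀:ℝ)^(1-c) * ((k₀:ℝ)^(c-1) * (k₀:ℝ)^(1-c)) := by ring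
          _ = 2*(k₀:ℝ)^(1-c) := by rw [hQS, mul_one]
          _ ≤ 2*(N:ℝ)^(1-c) := by linarith
      calc (k:ℝ)^(c-1) * ((k₀:ℝ) - (k:ℝ)) / ((k₀:ℝ)^c - (k:ℝ)^c)^2
          ≤ (k:ℝ)^(c-1) * ((k₀:ℝ)^(1-c))^2 / (c^2 * ((k₀:ℝ) - (k:ℝ))) := step1
        _ ≤ 2*(N:ℝ)^(1-c) / (c^2 * ((k₀:ℝ) - (k:ℝ))) :=
            (div_le_div_iff_of_pos_right (mul_pos hc2 hΔ)).mpr hPS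
        _ = 2 / c^2 * (N:ℝ)^(1-c) * ((k₀:ℝ) - (k:ℝ))⁻¹ := by
            rw [div_eq_mul_inv, div_eq_mul_inv, mul_inv]; ring
        _ ≤ 2 / c^2 * (N:ℝ)^(1-c) * (((k₀:ℝ) - (k:ℝ))⁻¹ + (k:ℝ)^(c-1)/(k₀:ℝ)^c) := by
            apply mul_le_mul_of_nonneg_left (by linarith) (by positivity)
    · -- 2k < k₀
      have hΔhalf : (k₀:ℝ) ≤ 2*((k₀:ℝ) - (k:ℝ)) := by
        have h7 : ((2*k+1 : ℕ):ℝ) ≤ (k₀:ℝ) := by exact_mod_cast (by omega : 2*k+1 ≤ k₀)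
        push_cast at h7
        linarith
      have e1 : ((k₀:ℝ)^(1-c))^2 * (k₀:ℝ)^c = (k₀:ℝ)^(1-c) * (k₀:ℝ) := by
        rw [sq, mul_assoc, hST]
      have i1 : (k₀:ℝ)^(1-c) * (k₀:ℝ) ≤ (N:ℝ)^(1-c) * (2*((k₀:ℝ) - (k:ℝ))) := by
        nlinarith [mul_nonneg (sub_nonneg.mpr hSN) hk0rp.le,
          mul_nonneg hNP.le (by linarith : (0:ℝ) ≤ 2*((k₀:ℝ) - (k:ℝ)) - (k₀:ℝ))]
      have goal2 : (k:ℝ)^(c-1) * ((k₀:ℝ)^(1-c))^2 / (c^2 * ((k₀:ℝ) - (k:ℝ)))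
          ≤ 2*(N:ℝ)^(1-c)*(k:ℝ)^(c-1) / (c^2 * (k₀:ℝ)^c) := by
        rw [div_le_div_iff₀ (mul_pos hc2 hΔ) (mul_pos hc2 hT)]
        calc (k:ℝ)^(c-1) * ((k₀:ℝ)^(1-c))^2 * (c^2 * (k₀:ℝ)^c)
            = c^2 * (k:ℝ)^(c-1) * (((k₀:ℝ)^(1-c))^2 * (k₀:ℝ)^c) := by ring
          _ = c^2 * (k:ℝ)^(c-1) * ((k₀:ℝ)^(1-c) * (k₀:ℝ)) := by rw [e1]
          _ ≤ c^2 * (k:ℝ)^(c-1) * ((N:ℝ)^(1-c) * (2*((k₀:ℝ) - (k:ℝ)))) :=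
              mul_le_mul_of_nonneg_left i1 (by positivity)
          _ = 2*(N:ℝ)^(1-c)*(k:ℝ)^(c-1) * (c^2 * ((k₀:ℝ) - (k:ℝ))) := by ring
      have hinv : (0:ℝ) ≤ ((k₀:ℝ) - (k:ℝ))⁻¹ := inv_nonneg.mpr hΔ.le
      calc (k:ℝ)^(c-1) * ((k₀:ℝ) - (k:ℝ)) / ((k₀:ℝ)^c - (k:ℝ)^c)^2
          ≤ (k:ℝ)^(c-1) * ((k₀:ℝ)^(1-c))^2 / (c^2 * ((k₀:ℝ) - (k:ℝ))) := step1
        _ ≤ 2*(N:ℝ)^(1-c)*(k:ℝ)^(c-1) / (c^2 * (k₀:ℝ)^c) := goal2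
        _ = 2 / c^2 * (N:ℝ)^(1-c) * ((k:ℝ)^(c-1)/(k₀:ℝ)^c) := by ring
        _ ≤ 2 / c^2 * (N:ℝ)^(1-c) * (((k₀:ℝ) - (k:ℝ))⁻¹ + (k:ℝ)^(c-1)/(k₀:ℝ)^c) := by
            apply mul_le_mul_of_nonneg_left (by linarith) (by positivity)
  · -- k₀ < k
    have hd : (k₀:ℝ) + 1 ≤ (k:ℝ) := by exact_mod_cast hgt
    have hΔ : (0:ℝ) < (k:ℝ) - (k₀:ℝ) := by linarith
    have habs : |(k₀:ℝ) - (k:ℝ)| = (k:ℝ) - (k₀:ℝ) := by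
      rw [abs_sub_comm]; exact abs_of_nonneg (by linarith)
    rw [habs, if_neg (by omega)]
    have h1 := key_ineq hc0 hc1 (x := (k₀:ℝ)) (y := (k:ℝ)) (by linarith) (by linarith) hkrp
    have hnum : (0:ℝ) < c * (k:ℝ)^(c-1) * ((k:ℝ) - (k₀:ℝ)) :=
      mul_pos (mul_pos hc0 hP) hΔ
    have hsq : (c * (k:ℝ)^(c-1) * ((k:ℝ) - (k₀:ℝ)))^2 ≤ ((k₀:ℝ)^c - (k:ℝ)^c)^2 := by
      rw [show ((k₀:ℝ)^c - (k:ℝ)^c)^2 = ((k:ℝ)^c - (k₀:ℝ)^c)^2 by ring]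
      exact pow_le_pow_left₀ hnum.le h1 2
    have hPR : (k:ℝ)^(c-1) * (k:ℝ)^(1-c) = 1 := by
      rw [← Real.rpow_add hkrp]; norm_num
    have hRN : (k:ℝ)^(1-c) ≤ (N:ℝ)^(1-c) := Real.rpow_le_rpow (by linarith) hkNr h1c
    calc (k:ℝ)^(c-1) * ((k:ℝ) - (k₀:ℝ)) / ((k₀:ℝ)^c - (k:ℝ)^c)^2
        ≤ (k:ℝ)^(c-1) * ((k:ℝ) - (k₀:ℝ)) / (c * (k:ℝ)^(c-1) * ((k:ℝ) - (k₀:ℝ)))^2 :=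
          div_le_div_of_nonneg_left (by positivity) (pow_pos hnum 2) hsq
      _ = (k:ℝ)^(1-c) / (c^2 * ((k:ℝ) - (k₀:ℝ))) := by
          rw [div_eq_div_iff (pow_pos hnum 2).ne' (mul_pos hc2 hΔ).ne']
          linear_combination (-(c^2 * ((k:ℝ) - (k₀:ℝ))^2 * (k:ℝ)^(c-1))) * hPR
      _ ≤ (N:ℝ)^(1-c) / (c^2 * ((k:ℝ) - (k₀:ℝ))) := by
          exact (div_le_div_iff_of_pos_right (mul_pos hc2 hΔ)).mpr hRN
      _ ≤ 2 / c^2 * (N:ℝ)^(1-c) * (((k:ℝ) - (k₀:ℝ))⁻¹ + 0) := by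
          rw [add_zero]
          have he : 2 / c^2 * (N:ℝ)^(1-c) * ((k:ℝ) - (k₀:ℝ))⁻¹
              = 2 * ((N:ℝ)^(1-c) / (c^2 * ((k:ℝ) - (k₀:ℝ)))) := by
            field_simp
          rw [he]
          have h0 : (0:ℝ) ≤ (N:ℝ)^(1-c) / (c^2 * ((k:ℝ) - (k₀:ℝ))) :=
            (div_pos hNP (mul_pos hc2 hΔ)).le
          linarith

open Finset in
theorem sum_bound_full (c : ℝ) (hc0 : 0 < c) (hc1 : c ≤ 1) :
    ∃ C : ℝ, ∀ k₀ N : ℕ, 0 < k₀ → 3 * k₀ ≤ 2 * N →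
      ∑ k ∈ (Finset.Icc 1 N).filter (· ≠ k₀),
          (k : ℝ) ^ (c - 1) * |(k₀ : ℝ) - (k : ℝ)| / ((k₀ : ℝ) ^ c - (k : ℝ) ^ c) ^ 2
        ≤ C * (N : ℝ) ^ (1 - c) * Real.log (N + 1) := by
  refine ⟨10 / c ^ 3, ?_⟩
  intro k₀ N hk₀pos hN
  have hk0N : k₀ ≤ N := by omega
  have hN2 : 2 ≤ N := by omega
  have hNr : (2:ℝ) ≤ (N:ℝ) := by exact_mod_cast hN2
  have hNpos : (0:ℝ) < (N:ℝ) := by linarith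
  have hNP : (0:ℝ) < (N:ℝ) ^ (1-c) := Real.rpow_pos_of_pos hNpos _
  set L := Real.log ((N:ℝ) + 1) with hLdef
  have hL1 : 1 ≤ L := by
    rw [hLdef, Real.le_log_iff_exp_le (by linarith)]
    calc Real.exp 1 ≤ 3 := by
          have := Real.exp_one_lt_d9; linarith
      _ ≤ (N:ℝ) + 1 := by linarith
  have hlogN : Real.log (N:ℝ) ≤ L := Real.log_le_log (by linarith) (by linarith)
  set S := (Finset.Icc 1 N).filter (· ≠ k₀) with hSdef
  have hterm : ∀ x ∈ S, (x:ℝ)^(c-1) * |(k₀:ℝ) - (x:ℝ)| / ((k₀:ℝ)^c - (x:ℝ)^c)^2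
      ≤ 2/c^2 * (N:ℝ)^(1-c) *
        (|(k₀:ℝ) - (x:ℝ)|⁻¹ + if x < k₀ then (x:ℝ)^(c-1)/(k₀:ℝ)^c else 0) := by
    intro x hx
    simp only [hSdef, Finset.mem_filter, Finset.mem_Icc] at hx
    exact term_bound hc0 hc1 hx.1.1 hx.1.2 hk₀pos hk0N hx.2
  have hsum1 := Finset.sum_le_sum hterm
  have hfactor : ∑ x ∈ S, 2/c^2 * (N:ℝ)^(1-c) *
        (|(k₀:ℝ) - (x:ℝ)|⁻¹ + if x < k₀ then (x:ℝ)^(c-1)/(k₀:ℝ)^c else 0)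
      = 2/c^2 * (N:ℝ)^(1-c) * ((∑ x ∈ S, |(k₀:ℝ) - (x:ℝ)|⁻¹)
        + ∑ x ∈ S, (if x < k₀ then (x:ℝ)^(c-1)/(k₀:ℝ)^c else 0)) := by
    rw [← Finset.mul_sum, Finset.sum_add_distrib]
  -- bound on the inverse-distance sum
  have hS1 : ∑ x ∈ S, |(k₀:ℝ) - (x:ℝ)|⁻¹ ≤ 2*(1 + Real.log (N:ℝ)) := by
    rw [← Finset.sum_filter_add_sum_filter_not S (· < k₀)]
    have hA : ∑ x ∈ S.filter (· < k₀), |(k₀:ℝ) - (x:ℝ)|⁻¹ ≤ 1 + Real.log (N:ℝ) := by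
      calc ∑ x ∈ S.filter (· < k₀), |(k₀:ℝ) - (x:ℝ)|⁻¹
          = ∑ x ∈ S.filter (· < k₀), (((k₀ - x : ℕ) : ℝ))⁻¹ := by
            apply Finset.sum_congr rfl
            intro x hx
            simp only [hSdef, Finset.mem_filter, Finset.mem_Icc] at hx
            have hxk : (x:ℝ) ≤ (k₀:ℝ) := by exact_mod_cast hx.2.le
            rw [Nat.cast_sub hx.2.le, abs_of_nonneg (by linarith)]
        _ ≤ ∑ j ∈ Icc 1 N, ((j:ℝ))⁻¹ := by
            apply sum_inv_le_harmonic _ (fun x => k₀ - x)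
            · intro x hx
              simp only [hSdef, Finset.mem_filter, Finset.mem_Icc] at hx ⊢
              omega
            · intro a ha b hb h
              simp only [hSdef, Finset.mem_filter, Finset.mem_Icc] at ha hb
              omega
        _ ≤ 1 + Real.log (N:ℝ) := harmonic_icc_le N
    have hB : ∑ x ∈ S.filter (fun x => ¬ x < k₀), |(k₀:ℝ) - (x:ℝ)|⁻¹ ≤ 1 + Real.log (N:ℝ) := by
      calc ∑ x ∈ S.filter (fun x => ¬ x < k₀), |(k₀:ℝ) - (x:ℝ)|⁻¹
          = ∑ x ∈ S.filter (fun x => ¬ x < k₀), (((x - k₀ : ℕ) : ℝ))⁻¹ := by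
            apply Finset.sum_congr rfl
            intro x hx
            simp only [hSdef, Finset.mem_filter, Finset.mem_Icc] at hx
            have hlt : k₀ < x := by omega
            have hxk : (k₀:ℝ) ≤ (x:ℝ) := by exact_mod_cast hlt.le
            rw [abs_sub_comm, Nat.cast_sub hlt.le, abs_of_nonneg (by linarith)]
        _ ≤ ∑ j ∈ Icc 1 N, ((j:ℝ))⁻¹ := by
            apply sum_inv_le_harmonic _ (fun x => x - k₀)
            · intro x hx
              simp only [hSdef, Finset.mem_filter, Finset.mem_Icc] at hx ⊢
              omega
            · intro a ha b hb h
              simp only [hSdef, Finset.mem_filter, Finset.mem_Icc] at ha hb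
              omega
        _ ≤ 1 + Real.log (N:ℝ) := harmonic_icc_le N
    linarith
  -- bound on the second sum
  have hk0rp : (0:ℝ) < (k₀:ℝ) := by exact_mod_cast hk₀pos
  have hk0c : (0:ℝ) < (k₀:ℝ)^c := Real.rpow_pos_of_pos hk0rp _
  have hS2 : ∑ x ∈ S, (if x < k₀ then (x:ℝ)^(c-1)/(k₀:ℝ)^c else 0) ≤ 1/c := by
    rw [← Finset.sum_filter, ← Finset.sum_div]
    have h8 : ∑ x ∈ S.filter (· < k₀), (x:ℝ)^(c-1) ≤ ∑ x ∈ Icc 1 (k₀-1), (x:ℝ)^(c-1) := by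
      apply Finset.sum_le_sum_of_subset_of_nonneg
      · intro x hx
        simp only [hSdef, Finset.mem_filter, Finset.mem_Icc] at hx ⊢
        omega
      · intro i _ _
        exact Real.rpow_nonneg (Nat.cast_nonneg i) _
    have h9 := sum_rpow_le hc0 hc1 (k₀-1)
    have h10 : ((k₀-1:ℕ):ℝ)^c ≤ (k₀:ℝ)^c :=
      Real.rpow_le_rpow (Nat.cast_nonneg _) (by exact_mod_cast Nat.sub_le k₀ 1) hc0.le
    have h11 : ∑ x ∈ S.filter (· < k₀), (x:ℝ)^(c-1) ≤ (k₀:ℝ)^c / c := by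
      calc ∑ x ∈ S.filter (· < k₀), (x:ℝ)^(c-1) ≤ ((k₀-1:ℕ):ℝ)^c / c := h8.trans h9
        _ ≤ (k₀:ℝ)^c / c := by apply div_le_div_of_nonneg_right h10 hc0.le
    calc (∑ x ∈ S.filter (· < k₀), (x:ℝ)^(c-1)) / (k₀:ℝ)^c
        ≤ ((k₀:ℝ)^c / c) / (k₀:ℝ)^c := by
          apply div_le_div_of_nonneg_right h11 hk0c.le
      _ = 1/c := by field_simp
  -- final combination
  have hkey : 2/c^2 * (4 + 1/c) ≤ 10/c^3 := by
    have e : 2/c^2 * (4 + 1/c) = (8*c + 2)/c^3 := by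
      field_simp; ring
    rw [e]
    apply div_le_div_of_nonneg_right (by linarith) (pow_pos hc0 3).le
  have hSsum : (∑ x ∈ S, |(k₀:ℝ) - (x:ℝ)|⁻¹)
      + (∑ x ∈ S, (if x < k₀ then (x:ℝ)^(c-1)/(k₀:ℝ)^c else 0)) ≤ (4 + 1/c) * L := by
    have hinvc : (0:ℝ) ≤ 1/c := by positivity
    nlinarith [mul_nonneg hinvc (by linarith : (0:ℝ) ≤ L - 1), hS1, hS2, hL1, hlogN]
  calc ∑ k ∈ S, (k:ℝ)^(c-1) * |(k₀:ℝ) - (k:ℝ)| / ((k₀:ℝ)^c - (k:ℝ)^c)^2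
      ≤ 2/c^2 * (N:ℝ)^(1-c) * ((∑ x ∈ S, |(k₀:ℝ) - (x:ℝ)|⁻¹)
        + ∑ x ∈ S, (if x < k₀ then (x:ℝ)^(c-1)/(k₀:ℝ)^c else 0)) := hsum1.trans (le_of_eq hfactor)
    _ ≤ 2/c^2 * (N:ℝ)^(1-c) * ((4 + 1/c) * L) := by
        apply mul_le_mul_of_nonneg_left hSsum (by positivity)
    _ = (2/c^2 * (4 + 1/c)) * ((N:ℝ)^(1-c) * L) := by ring
    _ ≤ (10/c^3) * ((N:ℝ)^(1-c) * L) := by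
        apply mul_le_mul_of_nonneg_right hkey
        exact mul_nonneg hNP.le (by linarith)
    _ = 10/c^3 * (N:ℝ)^(1-c) * L := by ring
end

section
/- Let c = 1/2. There is a constant C such that for every integer k ≥ 2 and every integer N ≥ 2, the sum over j from 2 to N of 1/(j² · (√k − √j)²), restricted to j ≠ k, is at most C/k. -/
open Finset

lemma term_bound_s7 (k j : ℕ) (hk : 2 ≤ k) (hj : 2 ≤ j) (hjk : j ≠ k) :
    1 / ((j : ℝ) ^ 2 * (Real.sqrt k - Real.sqrt j) ^ 2) * k
      ≤ 8 / (j : ℝ) ^ 2 + 8 / ((k : ℝ) - j) ^ 2 := by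
  set s := Real.sqrt j with hs_def
  set t := Real.sqrt k with ht_def
  have hx : (0:ℝ) < j := by positivity
  have hy : (0:ℝ) < k := by positivity
  have hs : s ^ 2 = (j:ℝ) := Real.sq_sqrt (by positivity)
  have ht : t ^ 2 = (k:ℝ) := Real.sq_sqrt (by positivity)
  have hxy : (j:ℝ) ≠ (k:ℝ) := by exact_mod_cast hjk
  have hyxne : (k:ℝ) - (j:ℝ) ≠ 0 := sub_ne_zero.mpr (Ne.symm hxy)
  have hts : t - s ≠ 0 := by
    intro h
    apply hxy
    have : t = s := by linarith [sub_eq_zero.mp h]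
    rw [← hs, ← ht, this]
  have hyx : (k:ℝ) - (j:ℝ) = (t + s) * (t - s) := by linear_combination hs - ht
  have key : (k:ℝ) * (t + s) ^ 2 ≤ 8 * ((k:ℝ) - j) ^ 2 + 8 * (j:ℝ) ^ 2 := by
    nlinarith [mul_nonneg hy.le (sq_nonneg (t - s)), sq_nonneg (2*(k:ℝ) - 3*(j:ℝ)),
      sq_nonneg ((j:ℝ)), hs, ht]
  have h1 : 1 / ((j : ℝ) ^ 2 * (t - s) ^ 2) * k = (k:ℝ) / ((j:ℝ)^2 * (t - s)^2) := by
    ring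
  rw [h1, div_add_div _ _ (by positivity) (pow_ne_zero 2 hyxne),
    div_le_div_iff₀ (by positivity) (by positivity)]
  have hmul := mul_le_mul_of_nonneg_right key
    (by positivity : (0:ℝ) ≤ (j:ℝ)^2 * (t - s)^2)
  rw [hyx] at hmul ⊢
  nlinarith [hmul]

lemma inv_sq_sum_le (M : ℕ) (T : Finset ℕ) (hT : T ⊆ Ioo 1 (M + 1)) :
    ∑ j ∈ T, ((j : ℝ) ^ 2)⁻¹ ≤ 1 := by
  calc ∑ j ∈ T, ((j : ℝ) ^ 2)⁻¹
      ≤ ∑ j ∈ Ioo 1 (M + 1), ((j : ℝ) ^ 2)⁻¹ :=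
        Finset.sum_le_sum_of_subset_of_nonneg hT (fun i _ _ => by positivity)
    _ ≤ 1 := by have h := sum_Ioo_inv_sq_le (α := ℝ) 1 (M + 1); norm_num at h; exact_mod_cast h

lemma inv_sq_sum_le' (M : ℕ) (T : Finset ℕ) (hT : T ⊆ Ioo 0 (M + 1)) :
    ∑ j ∈ T, ((j : ℝ) ^ 2)⁻¹ ≤ 2 := by
  calc ∑ j ∈ T, ((j : ℝ) ^ 2)⁻¹
      ≤ ∑ j ∈ Ioo 0 (M + 1), ((j : ℝ) ^ 2)⁻¹ :=
        Finset.sum_le_sum_of_subset_of_nonneg hT (fun i _ _ => by positivity)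
    _ ≤ 2 := by have h := sum_Ioo_inv_sq_le (α := ℝ) 0 (M + 1); norm_num at h; exact_mod_cast h

lemma snd_bound (k N : ℕ) (hk : 2 ≤ k) (hN : 2 ≤ N) :
    ∑ j ∈ (Finset.Icc 2 N).filter (· ≠ k), 8 / ((k : ℝ) - j) ^ 2 ≤ 32 := by
  set S := (Finset.Icc 2 N).filter (· ≠ k) with hS
  rw [← Finset.sum_filter_add_sum_filter_not S (· < k)]
  have h1 : ∑ j ∈ S.filter (· < k), 8 / ((k : ℝ) - j) ^ 2 ≤ 16 := by
    have he : ∀ j ∈ S.filter (· < k), 8 / ((k : ℝ) - j) ^ 2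
        = 8 * (((k - j : ℕ) : ℝ) ^ 2)⁻¹ := by
      intro j hj
      simp only [hS, mem_filter, mem_Icc] at hj
      rw [Nat.cast_sub hj.2.le]
      ring
    rw [Finset.sum_congr rfl he, ← Finset.mul_sum]
    have himg : ∑ j ∈ S.filter (· < k), (((k - j : ℕ) : ℝ) ^ 2)⁻¹
        = ∑ d ∈ (S.filter (· < k)).image (k - ·), ((d : ℝ) ^ 2)⁻¹ := by
      rw [Finset.sum_image]
      intro x hx y hy hxy
      simp only [hS, Finset.mem_coe, mem_filter, mem_Icc] at hx hy hxy
      omega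
    rw [himg]
    have hsub : (S.filter (· < k)).image (k - ·) ⊆ Ioo 0 (k + 1) := by
      intro d hd
      simp only [mem_image, hS, mem_filter, mem_Icc, mem_Ioo] at hd ⊢
      obtain ⟨j, hj, rfl⟩ := hd
      omega
    nlinarith [inv_sq_sum_le' k _ hsub]
  have h2 : ∑ j ∈ S.filter (fun j => ¬ j < k), 8 / ((k : ℝ) - j) ^ 2 ≤ 16 := by
    have he : ∀ j ∈ S.filter (fun j => ¬ j < k), 8 / ((k : ℝ) - j) ^ 2
        = 8 * (((j - k : ℕ) : ℝ) ^ 2)⁻¹ := by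
      intro j hj
      simp only [hS, mem_filter, mem_Icc, not_lt] at hj
      rw [Nat.cast_sub hj.2]
      rw [show ((k:ℝ) - j)^2 = ((j:ℝ) - k)^2 by ring]
      ring
    rw [Finset.sum_congr rfl he, ← Finset.mul_sum]
    have himg : ∑ j ∈ S.filter (fun j => ¬ j < k), (((j - k : ℕ) : ℝ) ^ 2)⁻¹
        = ∑ d ∈ (S.filter (fun j => ¬ j < k)).image (· - k), ((d : ℝ) ^ 2)⁻¹ := by
      rw [Finset.sum_image]
      intro x hx y hy hxy
      simp only [hS, Finset.mem_coe, mem_filter, mem_Icc, not_lt] at hx hy hxy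
      omega
    rw [himg]
    have hsub : (S.filter (fun j => ¬ j < k)).image (· - k) ⊆ Ioo 0 (N + 1) := by
      intro d hd
      simp only [mem_image, hS, mem_filter, mem_Icc, mem_Ioo, not_lt] at hd ⊢
      obtain ⟨j, hj, rfl⟩ := hd
      omega
    nlinarith [inv_sq_sum_le' N _ hsub]
  linarith

open Finset in
theorem sum_sqrt_bound :
    ∃ C : ℝ, ∀ k N : ℕ, 2 ≤ k → 2 ≤ N →
      ∑ j ∈ (Finset.Icc 2 N).filter (· ≠ k),
          1 / ((j : ℝ) ^ 2 * (Real.sqrt k - Real.sqrt j) ^ 2)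
        ≤ C / (k : ℝ) := by
  refine ⟨48, fun k N hk hN => ?_⟩
  have hk0 : (0:ℝ) < k := by positivity
  rw [le_div_iff₀ hk0, Finset.sum_mul]
  calc ∑ j ∈ (Finset.Icc 2 N).filter (· ≠ k),
        1 / ((j : ℝ) ^ 2 * (Real.sqrt k - Real.sqrt j) ^ 2) * k
      ≤ ∑ j ∈ (Finset.Icc 2 N).filter (· ≠ k),
          (8 / (j : ℝ) ^ 2 + 8 / ((k : ℝ) - j) ^ 2) := by
        refine Finset.sum_le_sum fun j hj => ?_
        simp only [mem_filter, mem_Icc] at hj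
        exact term_bound_s7 k j hk hj.1.1 hj.2
    _ = (∑ j ∈ (Finset.Icc 2 N).filter (· ≠ k), 8 / (j : ℝ) ^ 2)
        + ∑ j ∈ (Finset.Icc 2 N).filter (· ≠ k), 8 / ((k : ℝ) - j) ^ 2 :=
        Finset.sum_add_distrib
    _ ≤ 8 + 32 := by
        gcongr ?_ + ?_
        · have he : ∀ j ∈ (Finset.Icc 2 N).filter (· ≠ k),
              8 / (j : ℝ) ^ 2 = 8 * ((j : ℝ) ^ 2)⁻¹ := fun j _ => by ring
          rw [Finset.sum_congr rfl he, ← Finset.mul_sum]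
          have hsub : (Finset.Icc 2 N).filter (· ≠ k) ⊆ Ioo 1 (N + 1) := by
            intro j hj
            simp only [mem_filter, mem_Icc, mem_Ioo] at hj ⊢
            omega
          nlinarith [inv_sq_sum_le N _ hsub]
        · exact snd_bound k N hk hN
    _ ≤ 48 := by norm_num
end

section
/- Let X have the standard Cauchy distribution. Let c ∈ [1/2, 1], let k₀, k be positive integers with |k − k₀| ≥ 2, and let L ≥ 1. Then P(L·k₀^{1−c}·|(k−1)^c − k₀^c| ≤ |X| < L·k₀^{1−c}·|k^c − k₀^c|) ≤ C·(k₀·k)^{c−1} / ((k^c − k₀^c)²·L) for a constant C depending only on c. -/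
open MeasureTheory

/-- The standard Cauchy distribution on `ℝ`, with density `1/(π(1+x²))`. -/
noncomputable def stdCauchy : Measure ℝ :=
  volume.withDensity (fun x => ENNReal.ofReal (1 / (Real.pi * (1 + x ^ 2))))

/-- Tangent-line upper bound for concave rpow: x^c - y^c ≤ c y^(c-1) (x-y). -/
lemma rpow_sub_rpow_le (x y c : ℝ) (hy : 0 < y) (hxy : y ≤ x) (hc0 : 0 < c) (hc1 : c ≤ 1) :
    x ^ c - y ^ c ≤ c * y ^ (c - 1) * (x - y) := by
  set s : ℝ := (x - y) / y with hs
  have hs0 : 0 ≤ s := div_nonneg (by linarith) hy.le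
  have hx : x = y * (1 + s) := by rw [hs]; field_simp; ring
  have hb : (1 + s) ^ c ≤ 1 + c * s :=
    rpow_one_add_le_one_add_mul_self (by linarith) hc0.le hc1
  have hxc : x ^ c = y ^ c * (1 + s) ^ c := by
    rw [hx, Real.mul_rpow hy.le (by linarith)]
  have h1 : x ^ c ≤ y ^ c + c * (y ^ c * s) := by
    rw [hxc]
    have := mul_le_mul_of_nonneg_left hb (Real.rpow_nonneg hy.le c)
    nlinarith [this]
  have h2 : y ^ c * s = y ^ (c - 1) * (x - y) := by
    rw [Real.rpow_sub_one hy.ne', hs]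
    field_simp
  rw [h2] at h1
  linarith

/-- Tangent-line lower bound for concave rpow: c x^(c-1)(x-y) ≤ x^c - y^c. -/
lemma le_rpow_sub_rpow (x y c : ℝ) (hx : 0 < x) (hy : 0 ≤ y) (hxy : y ≤ x)
    (hc0 : 0 ≤ c) (hc1 : c ≤ 1) :
    c * x ^ (c - 1) * (x - y) ≤ x ^ c - y ^ c := by
  set s : ℝ := y / x - 1 with hs
  have hs1 : -1 ≤ s := by
    have : 0 ≤ y / x := div_nonneg hy hx.le
    simp [hs]; linarith
  have hyx : y = x * (1 + s) := by rw [hs]; field_simp; ring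
  have hb : (1 + s) ^ c ≤ 1 + c * s :=
    rpow_one_add_le_one_add_mul_self hs1 hc0 hc1
  have hyc : y ^ c = x ^ c * (1 + s) ^ c := by
    rw [hyx, Real.mul_rpow hx.le (by linarith)]
  have h1 : y ^ c ≤ x ^ c + c * (x ^ c * s) := by
    rw [hyc]
    nlinarith [mul_le_mul_of_nonneg_left hb (Real.rpow_nonneg hx.le c)]
  have h2 : x ^ c * s = x ^ (c - 1) * (y - x) := by
    rw [Real.rpow_sub_one hx.ne', hs]
    field_simp
  rw [h2] at h1
  linarith

/-- Cauchy measure of an annulus bound. -/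
lemma stdCauchy_annulus (a b : ℝ) (ha : 0 < a) :
    stdCauchy {x : ℝ | a ≤ |x| ∧ |x| < b} ≤ ENNReal.ofReal (2 * (b - a) / (Real.pi * a ^ 2)) := by
  set S : Set ℝ := {x : ℝ | a ≤ |x| ∧ |x| < b} with hSdef
  have hS : MeasurableSet S := by
    have : S = (fun x : ℝ => |x|) ⁻¹' Set.Ico a b := rfl
    rw [this]
    exact measurableSet_Ico.preimage measurable_abs
  rcases le_or_gt b a with hba | hab
  · have : S = ∅ := by
      ext x; simp only [hSdef, Set.mem_setOf_eq, Set.mem_empty_iff_false, iff_false]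
      rintro ⟨h1, h2⟩; linarith
    rw [this]; simp
  have hpi : 0 < Real.pi := Real.pi_pos
  have key : stdCauchy S ≤ ENNReal.ofReal (1 / (Real.pi * a ^ 2)) * volume S := by
    rw [stdCauchy, withDensity_apply _ hS]
    calc ∫⁻ x in S, ENNReal.ofReal (1 / (Real.pi * (1 + x ^ 2)))
        ≤ ∫⁻ _ in S, ENNReal.ofReal (1 / (Real.pi * a ^ 2)) := by
          apply setLIntegral_mono measurable_const
          intro x hx
          apply ENNReal.ofReal_le_ofReal
          apply one_div_le_one_div_of_le (by positivity)
          have : a ^ 2 ≤ x ^ 2 := by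
            have := hx.1
            nlinarith [abs_nonneg x, sq_abs x]
          nlinarith
      _ = ENNReal.ofReal (1 / (Real.pi * a ^ 2)) * volume S := by
          rw [setLIntegral_const]
  have hvol : volume S ≤ ENNReal.ofReal (2 * (b - a)) := by
    have hsub : S ⊆ Set.Icc (-b) (-a) ∪ Set.Icc a b := by
      intro x ⟨h1, h2⟩
      rcases le_or_gt 0 x with hx | hx
      · right; rw [abs_of_nonneg hx] at h1 h2; exact ⟨h1, h2.le⟩
      · left; rw [abs_of_neg hx] at h1 h2; constructor <;> linarith
    calc volume S ≤ volume (Set.Icc (-b) (-a) ∪ Set.Icc a b) := measure_mono hsub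
      _ ≤ volume (Set.Icc (-b) (-a)) + volume (Set.Icc a b) := measure_union_le _ _
      _ = ENNReal.ofReal (b - a) + ENNReal.ofReal (b - a) := by
          rw [Real.volume_Icc, Real.volume_Icc]; ring_nf
      _ = ENNReal.ofReal (2 * (b - a)) := by
          rw [← ENNReal.ofReal_add (by linarith) (by linarith)]; ring_nf
  calc stdCauchy S ≤ ENNReal.ofReal (1 / (Real.pi * a ^ 2)) * volume S := key
    _ ≤ ENNReal.ofReal (1 / (Real.pi * a ^ 2)) * ENNReal.ofReal (2 * (b - a)) := by
        exact mul_le_mul_right hvol _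
    _ = ENNReal.ofReal (2 * (b - a) / (Real.pi * a ^ 2)) := by
        rw [← ENNReal.ofReal_mul (by positivity)]
        ring_nf

lemma annulus_measurable (a b : ℝ) : MeasurableSet {x : ℝ | a ≤ |x| ∧ |x| < b} := by
  have : {x : ℝ | a ≤ |x| ∧ |x| < b} = (fun x : ℝ => |x|) ⁻¹' Set.Ico a b := rfl
  rw [this]
  exact measurableSet_Ico.preimage measurable_abs

set_option maxHeartbeats 1000000 in
theorem cauchy_annulus_bound (c : ℝ) (hc0 : 1 / 2 ≤ c) (hc1 : c ≤ 1) :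
    ∃ C : ℝ, ∀ {Ω : Type} [MeasurableSpace Ω] (P : Measure Ω), IsProbabilityMeasure P →
      ∀ (X : Ω → ℝ), Measurable X → Measure.map X P = stdCauchy →
      ∀ (k₀ k : ℕ) (L : ℝ), 0 < k₀ → 0 < k → 2 ≤ |(k : ℤ) - (k₀ : ℤ)| → 1 ≤ L →
        P {ω | L * (k₀ : ℝ) ^ (1 - c) * |((k : ℝ) - 1) ^ c - (k₀ : ℝ) ^ c| ≤ |X ω| ∧
               |X ω| < L * (k₀ : ℝ) ^ (1 - c) * |(k : ℝ) ^ c - (k₀ : ℝ) ^ c|}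
          ≤ ENNReal.ofReal (C * ((k₀ : ℝ) * k) ^ (c - 1) /
              (((k : ℝ) ^ c - (k₀ : ℝ) ^ c) ^ 2 * L)) := by
  refine ⟨36, ?_⟩
  intro Ω instΩ P hP X hX hmap k₀ k L hk₀ hk hdist hL
  have hK0 : (1:ℝ) ≤ (k₀ : ℝ) := by exact_mod_cast hk₀
  have hK : (1:ℝ) ≤ (k : ℝ) := by exact_mod_cast hk
  have hc : 0 < c := by linarith
  have hL0 : 0 < L := by linarith
  have hs0 : (0:ℝ) < (k₀ : ℝ) ^ (1 - c) := Real.rpow_pos_of_pos (by linarith) _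
  set A : ℝ := L * (k₀ : ℝ) ^ (1 - c) * |((k : ℝ) - 1) ^ c - (k₀ : ℝ) ^ c| with hA
  set B : ℝ := L * (k₀ : ℝ) ^ (1 - c) * |(k : ℝ) ^ c - (k₀ : ℝ) ^ c| with hB
  have hmapS : P {ω | A ≤ |X ω| ∧ |X ω| < B} = stdCauchy {x : ℝ | A ≤ |x| ∧ |x| < B} := by
    rw [← hmap, Measure.map_apply hX (annulus_measurable A B)]
    rfl
  rw [hmapS]
  have hcase : (k₀:ℤ) + 2 ≤ k ∨ (k:ℤ) + 2 ≤ k₀ := by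
    rcases abs_cases ((k:ℤ) - (k₀:ℤ)) with ⟨h, _⟩ | ⟨h, _⟩ <;> omega
  rcases hcase with hcase | hcase
  · -- main case : k₀ + 2 ≤ k
    have hKK : (k₀ : ℝ) + 2 ≤ (k : ℝ) := by exact_mod_cast hcase
    set u : ℝ := (k₀ : ℝ) ^ c with hu
    set v : ℝ := (k : ℝ) ^ c with hv
    set w : ℝ := ((k : ℝ) - 1) ^ c with hw
    set s : ℝ := (k₀ : ℝ) ^ (1 - c) with hsdef
    set t : ℝ := (k : ℝ) ^ (c - 1) with htdef
    set q : ℝ := ((k₀ : ℝ) * k) ^ (c - 1) with hqdef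
    have hK0pos : (0:ℝ) < (k₀ : ℝ) := by linarith
    have ht0 : 0 < t := Real.rpow_pos_of_pos (by linarith) _
    have hq0 : 0 < q := Real.rpow_pos_of_pos (by positivity) _
    have hK1pos : (0:ℝ) < (k : ℝ) - 1 := by linarith
    have huw : u < w := Real.rpow_lt_rpow hK0pos.le (by linarith) hc
    have hwv : w < v := Real.rpow_lt_rpow hK1pos.le (by linarith) hc
    have huv : u < v := huw.trans hwv
    have habs1 : |w - u| = w - u := abs_of_pos (by linarith)
    have habs2 : |v - u| = v - u := abs_of_pos (by linarith)
    have hApos : 0 < A := by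
      rw [hA, habs1]
      exact mul_pos (mul_pos hL0 hs0) (by linarith)
    refine le_trans (stdCauchy_annulus A B hApos) (ENNReal.ofReal_le_ofReal ?_)
    -- key inequalities
    have f_up : v - w ≤ c * ((k:ℝ) - 1) ^ (c - 1) * 1 := by
      have := rpow_sub_rpow_le (k : ℝ) ((k:ℝ) - 1) c hK1pos (by linarith) hc hc1
      simpa using this
    have f_lo : c * ((k:ℝ) - 1) ^ (c - 1) * 1 ≤ w - u := by
      have h1 := le_rpow_sub_rpow ((k:ℝ) - 1) (k₀ : ℝ) c hK1pos hK0pos.le (by linarith)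
        hc.le hc1
      have h2 : c * ((k:ℝ) - 1) ^ (c - 1) * 1 ≤ c * ((k:ℝ) - 1) ^ (c - 1) * (((k:ℝ) - 1) - k₀) := by
        have : (0:ℝ) ≤ c * ((k:ℝ) - 1) ^ (c - 1) := by positivity
        nlinarith [this]
      linarith
    have f_t : ((k:ℝ) - 1) ^ (c - 1) ≤ 2 * t := by
      have h1 : ((k:ℝ) - 1) ^ (c - 1) ≤ ((k:ℝ) / 2) ^ (c - 1) :=
        Real.rpow_le_rpow_of_nonpos (by linarith) (by linarith) (by linarith)
      have h2 : ((k:ℝ) / 2) ^ (c - 1) = t / (2:ℝ) ^ (c - 1) := by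
        rw [Real.div_rpow (by linarith) (by norm_num)]
      have h3 : (1:ℝ) / 2 ≤ (2:ℝ) ^ (c - 1) := by
        have := Real.rpow_le_rpow_of_exponent_le (one_le_two (α := ℝ))
          (show (-1:ℝ) ≤ c - 1 by linarith)
        rw [Real.rpow_neg_one] at this
        linarith
      have h4 : t / (2:ℝ) ^ (c - 1) ≤ 2 * t := by
        rw [div_le_iff₀ (by positivity)]
        nlinarith [ht0]
      linarith
    have hX1 : (0:ℝ) ≤ ((k:ℝ) - 1) ^ (c - 1) := Real.rpow_nonneg (by linarith) _
    have hcle : c * ((k:ℝ) - 1) ^ (c - 1) * 1 ≤ ((k:ℝ) - 1) ^ (c - 1) := by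
      nlinarith [hX1]
    have key1 : v - w ≤ 2 * t := by linarith
    have key2 : v - u ≤ 2 * (w - u) := by linarith
    have hq : s * q = t := by
      rw [hqdef, Real.mul_rpow hK0pos.le (by linarith), hsdef, ← mul_assoc,
        ← Real.rpow_add hK0pos]
      norm_num [htdef]
    -- the real inequality
    rw [hA, hB, habs1, habs2]
    rw [div_le_div_iff₀
      (mul_pos Real.pi_pos (pow_pos (mul_pos (mul_pos hL0 hs0) (by linarith : (0:ℝ) < w - u)) 2))
      (mul_pos (pow_pos (by linarith : (0:ℝ) < v - u) 2) hL0)]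
    have h3 : (v - u) ^ 2 ≤ 4 * (w - u) ^ 2 := by nlinarith [key2, huw, huv]
    have h4 : (v - w) * (v - u) ^ 2 ≤ 8 * t * (w - u) ^ 2 := by
      calc (v - w) * (v - u) ^ 2 ≤ (2 * t) * (v - u) ^ 2 :=
            mul_le_mul_of_nonneg_right key1 (sq_nonneg _)
        _ ≤ (2 * t) * (4 * (w - u) ^ 2) := by
            apply mul_le_mul_of_nonneg_left h3 (by positivity)
        _ = 8 * t * (w - u) ^ 2 := by ring
    have hπ : (3:ℝ) ≤ Real.pi := Real.pi_gt_three.le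
    calc 2 * (L * s * (v - u) - L * s * (w - u)) * ((v - u) ^ 2 * L)
        = (2 * L ^ 2 * s) * ((v - w) * (v - u) ^ 2) := by ring
      _ ≤ (2 * L ^ 2 * s) * (8 * t * (w - u) ^ 2) :=
          mul_le_mul_of_nonneg_left h4 (by positivity)
      _ = 16 * (L ^ 2 * (s * t) * (w - u) ^ 2) := by ring
      _ ≤ 36 * Real.pi * (L ^ 2 * (s * t) * (w - u) ^ 2) := by
          nlinarith [hπ, sq_nonneg (L * (w - u)), mul_pos hs0 ht0,
            mul_pos (mul_pos (mul_pos hL0 hL0) (mul_pos hs0 ht0))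
              (mul_pos (sub_pos.mpr huw) (sub_pos.mpr huw))]
      _ = 36 * q * (Real.pi * (L * s * (w - u)) ^ 2) := by rw [← hq]; ring
  · -- degenerate case : k + 2 ≤ k₀, the annulus is empty-ish
    have hKK : (k : ℝ) + 2 ≤ (k₀ : ℝ) := by exact_mod_cast hcase
    have hK1 : (0:ℝ) ≤ (k : ℝ) - 1 := by linarith
    have hwv : ((k:ℝ) - 1) ^ c ≤ (k:ℝ) ^ c := Real.rpow_le_rpow hK1 (by linarith) hc.le
    have hvu : (k:ℝ) ^ c < (k₀:ℝ) ^ c := Real.rpow_lt_rpow (by linarith) (by linarith) hc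
    have hwu : ((k:ℝ) - 1) ^ c < (k₀:ℝ) ^ c := lt_of_le_of_lt hwv hvu
    have habs1 : |((k : ℝ) - 1) ^ c - (k₀ : ℝ) ^ c| = (k₀ : ℝ) ^ c - ((k : ℝ) - 1) ^ c := by
      rw [abs_sub_comm]; exact abs_of_pos (by linarith)
    have habs2 : |(k : ℝ) ^ c - (k₀ : ℝ) ^ c| = (k₀ : ℝ) ^ c - (k : ℝ) ^ c := by
      rw [abs_sub_comm]; exact abs_of_pos (by linarith)
    have hApos : 0 < A := by
      rw [hA, habs1]
      exact mul_pos (mul_pos hL0 hs0) (by linarith)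
    refine le_trans (stdCauchy_annulus A B hApos) ?_
    have hBA : 2 * (B - A) / (Real.pi * A ^ 2) ≤ 0 := by
      apply div_nonpos_of_nonpos_of_nonneg
      · have : B ≤ A := by
          rw [hA, hB, habs1, habs2]
          have : (k₀ : ℝ) ^ c - (k : ℝ) ^ c ≤ (k₀ : ℝ) ^ c - ((k:ℝ) - 1) ^ c := by linarith
          nlinarith [mul_pos hL0 hs0]
        linarith
      · positivity
    rw [ENNReal.ofReal_of_nonpos hBA]
    exact bot_le
end
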